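/- Let A be a unital complex Banach algebra (a complete normed ring that is a normed ℂ-algebra) and x ∈ A with x·x = 4·1. Then for every ξ ∈ ℂ, exp(πi(ξ+1)) • exp((πi(ξ+1)/2) • x) = exp(πiξ) • exp((πiξ/2) • x), where the outer exp is the complex exponential acting by scalar multiplication and the inner exp is the exponential defined by the convergent power series in A. -/

import Mathlib

open Complex

lemma exp_smul_of_sq_one {A : Type*} [NormedRing A] [NormedAlgebra ℂ A] [CompleteSpace A]
    (y : A) (hy : y * y = 1) (c : ℂ) :
    NormedSpace.exp (c • y) = Complex.cosh c • (1 : A) + Complex.sinh c • y := by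
  have hyk : ∀ k : ℕ, y ^ (2 * k) = 1 := by
    intro k
    rw [pow_mul, sq, hy, one_pow]
  rw [NormedSpace.exp_eq_tsum ℂ]
  refine HasSum.tsum_eq (HasSum.even_add_odd ?_ ?_)
  · have h := (Complex.hasSum_cosh c).smul_const (1 : A)
    convert h using 2 with k
    rw [smul_pow, hyk, smul_smul]
    congr 1
    field_simp
  · have h := (Complex.hasSum_sinh c).smul_const y
    convert h using 2 with k
    have hy' : y ^ (2 * k + 1) = y := by rw [pow_succ, hyk, one_mul]
    rw [smul_pow, hy', smul_smul, inv_mul_eq_div]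

/-- If `x * x = 4` in a unital complex Banach algebra, then the map
`ξ ↦ exp (π i ξ) • exp ((π i ξ / 2) • x)` is invariant under `ξ ↦ ξ + 1`. -/
theorem stmt_6 {A : Type*} [NormedRing A] [NormedAlgebra ℂ A] [CompleteSpace A]
    (x : A) (hx : x * x = 4 • (1 : A)) :
    ∀ ξ : ℂ,
      Complex.exp ((Real.pi : ℂ) * Complex.I * (ξ + 1)) •
          NormedSpace.exp (((Real.pi : ℂ) * Complex.I * (ξ + 1) / 2) • x)
        = Complex.exp ((Real.pi : ℂ) * Complex.I * ξ) •
            NormedSpace.exp (((Real.pi : ℂ) * Complex.I * ξ / 2) • x) := by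
  intro ξ
  set y : A := (2 : ℂ)⁻¹ • x with hy_def
  have hy : y * y = 1 := by
    rw [hy_def, smul_mul_smul_comm, hx, ← Nat.cast_smul_eq_nsmul ℂ, smul_smul]
    norm_num [one_smul]
  have hxy : ∀ c : ℂ, (c / 2) • x = c • y := by
    intro c
    rw [hy_def, smul_smul, div_eq_mul_inv]
  have key : ∀ c : ℂ, NormedSpace.exp ((c / 2) • x)
      = Complex.cosh c • (1 : A) + Complex.sinh c • y := by
    intro c
    rw [hxy, exp_smul_of_sq_one y hy]
  rw [key, key]
  have hcoshpi : Complex.cosh ((Real.pi : ℂ) * Complex.I) = -1 := by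
    rw [Complex.cosh_mul_I, Complex.cos_pi]
  have hsinhpi : Complex.sinh ((Real.pi : ℂ) * Complex.I) = 0 := by
    rw [Complex.sinh_mul_I, Complex.sin_pi, zero_mul]
  have h1 : (Real.pi : ℂ) * Complex.I * (ξ + 1)
      = (Real.pi : ℂ) * Complex.I * ξ + (Real.pi : ℂ) * Complex.I := by ring
  rw [h1, Complex.exp_add, Complex.cosh_add, Complex.sinh_add, hcoshpi, hsinhpi,
    Complex.exp_pi_mul_I]
  module
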